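/- Let R be a commutative ring, M an R-module, and (𝔭_i)_{i ∈ I} a family of prime ideals each Krull-associated to M. If the union 𝔭 := ⋃_{i ∈ I} 𝔭_i is a prime ideal of R, then 𝔭 is Krull-associated to M. -/

import Mathlib

section Defs

variable (A L : Type*) [CommRing A] [AddCommGroup L] [Module A L]

/-- `a ∈ A` is a zero divisor for the module `L`:
`a • y = 0` for some `y ≠ 0` in `L`. -/
def IsZeroDivisorFor (a : A) : Prop := ∃ y : L, y ≠ 0 ∧ a • y = 0

/-- `a ∈ A` is nilpotent for the module `L`: for every `y ∈ L` there is `n`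
with `a ^ n • y = 0`. -/
def IsNilpotentFor (a : A) : Prop := ∀ y : L, ∃ n : ℕ, a ^ n • y = 0

/-- `L` is `q`-coprimary: `L ≠ 0`, every zero divisor for `L` lies in `q`,
and every element of `q` is nilpotent for `L`. -/
def IsCoprimaryFor (q : Ideal A) : Prop :=
  (∃ y : L, y ≠ 0) ∧ (∀ a : A, IsZeroDivisorFor A L a → a ∈ q) ∧
    ∀ a ∈ q, IsNilpotentFor A L a

/-- A submodule `N` of `L` is `q`-primary in `L` iff `L ⧸ N` is `q`-coprimary. -/
def IsPrimaryIn (N : Submodule A L) (q : Ideal A) : Prop :=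
  IsCoprimaryFor A (L ⧸ N) q

/-- The `S`-component of `N` in `L`: `{x ∈ L | ∃ s ∈ S, s • x ∈ N}`,
for an arbitrary subset `S ⊆ A`. -/
def sComp (S : Set A) (N : Submodule A L) : Set L := {x : L | ∃ s ∈ S, s • x ∈ N}

/-- A prime ideal `p` is Krull-associated to `L` iff for every multiplicatively
closed subset `T ⊋ A ∖ p` one has `T^L((0)) ⊋ (A ∖ p)^L((0))`. -/
def KrullAssociated (p : Ideal A) : Prop :=
  ∀ T : Submonoid A, ((p : Set A)ᶜ ⊂ (T : Set A)) →
    sComp A L ((p : Set A)ᶜ) ⊥ ⊂ sComp A L (T : Set A) ⊥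

end Defs

/-- if `(𝔭ᵢ)` is a family of primes Krull-associated to `M`
whose union is a prime ideal `𝔭`, then `𝔭` is Krull-associated to `M`. -/
theorem statement13 {R M ι : Type*} [CommRing R] [AddCommGroup M] [Module R M]
    (p : ι → Ideal R) (hp : ∀ i, (p i).IsPrime)
    (hass : ∀ i, KrullAssociated R M (p i))
    (𝔭 : Ideal R) (h𝔭 : 𝔭.IsPrime)
    (hunion : (𝔭 : Set R) = ⋃ i, (p i : Set R)) :
    KrullAssociated R M 𝔭 := by
  intro T hT
  obtain ⟨t, htT, htc⟩ := Set.exists_of_ssubset hT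
  have ht𝔭 : t ∈ (𝔭 : Set R) := not_not.mp htc
  rw [hunion] at ht𝔭
  obtain ⟨_, ⟨i, rfl⟩, hti⟩ := ht𝔭
  have hpi𝔭 : (p i : Set R) ⊆ (𝔭 : Set R) := by
    rw [hunion]; exact Set.subset_iUnion (fun j => (p j : Set R)) i
  set Ti : Submonoid R := Submonoid.closure (((p i : Set R))ᶜ ∪ {t}) with hTi
  have hsub : ((p i : Set R))ᶜ ⊆ (Ti : Set R) := fun u hu =>
    Submonoid.subset_closure (Or.inl hu)
  have htTi : t ∈ Ti := Submonoid.subset_closure (Or.inr rfl)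
  have hss : ((p i : Set R))ᶜ ⊂ (Ti : Set R) :=
    ⟨hsub, fun h => (h htTi) hti⟩
  obtain ⟨hsub2, hne⟩ := hass i Ti hss
  rw [Set.not_subset] at hne
  obtain ⟨x, hxTi, hxpi⟩ := hne
  obtain ⟨s, hsTi, hsx⟩ := hxTi
  have hform : ∃ u n, u ∉ p i ∧ s = u * t ^ n := by
    refine Submonoid.closure_induction (motive := fun s _ => ∃ u n, u ∉ p i ∧ s = u * t ^ n)
      ?_ ?_ ?_ hsTi
    · rintro a (ha | rfl)
      · exact ⟨a, 0, ha, by simp⟩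
      · exact ⟨1, 1, (hp i).ne_top ∘ (Ideal.eq_top_iff_one _).mpr, by simp⟩
    · exact ⟨1, 0, (hp i).ne_top ∘ (Ideal.eq_top_iff_one _).mpr, by simp⟩
    · rintro a b _ _ ⟨u, n, hu, rfl⟩ ⟨v, m, hv, rfl⟩
      exact ⟨u * v, n + m, fun h => ((hp i).mem_or_mem h).elim hu hv, by ring⟩
  obtain ⟨u, n, hu, rfl⟩ := hform
  refine ⟨fun z hz => ?_, fun h => ?_⟩
  · obtain ⟨w, hw, hwz⟩ := hz
    exact ⟨w, hT.subset hw, hwz⟩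
  · have hyT : u • x ∈ sComp R M (T : Set R) ⊥ := by
      refine ⟨t ^ n, pow_mem htT n, ?_⟩
      rw [smul_smul]
      rw [show t ^ n * u = u * t ^ n from mul_comm _ _]
      exact hsx
    obtain ⟨v, hv, hvx⟩ := h hyT
    have hvpi : v ∉ p i := fun hvp => hv (hpi𝔭 hvp)
    refine hxpi ⟨v * u, fun hvu => ((hp i).mem_or_mem hvu).elim hvpi hu, ?_⟩
    rw [mul_smul]
    exact hvx
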